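/- Let Ψ : ℝ^d → ℝ be convex with invertible gradient map, and for t ∈ [0,1) let φ_t = (1−t)·Id + t·∇Ψ. Define u_t(x) = ∇Ψ(z) − z where z = φ_t^{-1}(x). Then for any x₀, x₁ ∈ ℝ^d, with x_t = (1−t)x₀ + t x₁: ∫₀¹ ‖u_t(x_t) − (x₁ − x₀)‖² dt = 2[Ψ(x₀) + Ψ̄(x₁) − ⟨x₀,x₁⟩]. -/

import Mathlib

open scoped RealInnerProductSpace

theorem grad_ineq_aux (d : ℕ) (Ψ : EuclideanSpace ℝ (Fin d) → ℝ)
    (hconv : ConvexOn ℝ Set.univ Ψ)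
    {z gz : EuclideanSpace ℝ (Fin d)} (h : HasGradientAt Ψ gz z)
    (y : EuclideanSpace ℝ (Fin d)) :
    Ψ z + ⟪gz, y - z⟫ ≤ Ψ y := by
  have hc : HasDerivAt (fun τ : ℝ => z + τ • (y - z)) (y - z) 0 := by
    simpa using ((hasDerivAt_id (0:ℝ)).smul_const (y - z)).const_add z
  have hd : HasDerivAt (fun τ : ℝ => Ψ (z + τ • (y - z))) ⟪gz, y - z⟫ 0 := by
    have hz : HasFDerivAt Ψ ((InnerProductSpace.toDual ℝ _) gz) (z + (0:ℝ) • (y - z)) := by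
      simpa using h.hasFDerivAt
    have := hz.comp_hasDerivAt 0 hc
    simp at this
    exact this
  have hslope : Filter.Tendsto (slope (fun τ : ℝ => Ψ (z + τ • (y - z))) 0)
      (nhdsWithin 0 (Set.Ioi 0)) (nhds ⟪gz, y - z⟫) :=
    (hasDerivAt_iff_tendsto_slope.1 hd).mono_left
      (nhdsWithin_mono 0 (fun x hx => ne_of_gt hx))
  have hev : ∀ᶠ τ in nhdsWithin (0:ℝ) (Set.Ioi 0),
      slope (fun τ : ℝ => Ψ (z + τ • (y - z))) 0 τ ≤ Ψ y - Ψ z := by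
    filter_upwards [Ioo_mem_nhdsGT_of_mem (by norm_num : (0:ℝ) ∈ Set.Ico (0:ℝ) 1)] with τ hτ
    have h1 : Ψ ((1 - τ) • z + τ • y) ≤ (1 - τ) * Ψ z + τ * Ψ y :=
      hconv.2 (Set.mem_univ z) (Set.mem_univ y) (by linarith [hτ.2]) (le_of_lt hτ.1) (by ring)
    have h2 : z + τ • (y - z) = (1 - τ) • z + τ • y := by module
    have h3 : z + (0:ℝ) • (y - z) = z := by module
    rw [slope_def_field, h2, h3, sub_zero, div_le_iff₀ hτ.1]
    nlinarith [hτ.1]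
  have := le_of_tendsto hslope hev
  linarith


theorem ofm_bound_aux (s t p q r M0 K : ℝ) (hs0 : 0 < s) (hs1 : s < 1)
    (hp0 : 0 ≤ p) (hpb : p ≤ M0^2) (hr0 : 0 ≤ r) (hrb : r ≤ K^2*(s-t)^2)
    (hM00 : 0 ≤ M0) (hK0 : 0 ≤ K)
    (hqb : |q| ≤ M0 * (K * |s - t|)) :
    |(-(1/2)*(s-t)^2*p - s*(s-t)*q + (1/2)*s*(1-s)*r)|
      ≤ ((1/2)*M0^2 + M0*K + (1/2)*K^2 + (M0+K)^2) * (s-t)^2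
    ∧ |((1/2)*(s-t)^2*p + (s-1)*(s-t)*q - (1/2)*s*(1-s)*r)|
      ≤ ((1/2)*M0^2 + M0*K + (1/2)*K^2 + (M0+K)^2) * (s-t)^2 := by
  have hB0 : 0 ≤ M0*K*(s-t)^2 := by positivity
  have hX : |(s-t)*q| ≤ M0*K*(s-t)^2 := by
    rw [abs_mul]
    calc |s - t| * |q| ≤ |s - t| * (M0 * (K * |s - t|)) :=
          mul_le_mul_of_nonneg_left hqb (abs_nonneg _)
      _ = M0 * K * (|s - t| * |s - t|) := by ring
      _ = M0 * K * (s-t)^2 := by rw [← sq, sq_abs]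
  have hX1 := (abs_le.1 hX).1
  have hX2 := (abs_le.1 hX).2
  have hsX1 : s*((s-t)*q) ≤ M0*K*(s-t)^2 := by nlinarith
  have hsX2 : -(M0*K*(s-t)^2) ≤ s*((s-t)*q) := by nlinarith
  have hsX3 : (1-s)*((s-t)*q) ≤ M0*K*(s-t)^2 := by nlinarith
  have hsX4 : -(M0*K*(s-t)^2) ≤ (1-s)*((s-t)*q) := by nlinarith
  have hP1 : (s-t)^2 * p ≤ (s-t)^2 * M0^2 := mul_le_mul_of_nonneg_left hpb (sq_nonneg _)
  have hP0 : 0 ≤ (s-t)^2 * p := mul_nonneg (sq_nonneg _) hp0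
  have hss : s*(1-s) ≤ 1 := by nlinarith
  have hr1 : 0 ≤ s*((1-s)*r) := mul_nonneg hs0.le (mul_nonneg (by linarith) hr0)
  have hr2 : s*((1-s)*r) ≤ K^2*(s-t)^2 := by nlinarith
  have hKs : 0 ≤ K^2*(s-t)^2 := by positivity
  have hMK : 0 ≤ (M0+K)^2*(s-t)^2 := by positivity
  constructor
  · rw [abs_le]
    constructor
    · linarith [hsX1, hsX2, hr1, hr2, hP1, hP0, hKs, hMK, hB0]
    · linarith [hsX1, hsX2, hr1, hr2, hP1, hP0, hKs, hMK, hB0]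
  · rw [abs_le]
    constructor
    · linarith [hsX3, hsX4, hr1, hr2, hP1, hP0, hKs, hMK, hB0]
    · linarith [hsX3, hsX4, hr1, hr2, hP1, hP0, hKs, hMK, hB0]

set_option maxHeartbeats 3000000 in
/-- The central OFM identity: with `φ_t = (1−t)·Id + t·∇Ψ` invertible, `ζ t` the preimage
of `x_t = (1−t)x₀ + t x₁` under `φ_t`, and `u_t(x_t) = ∇Ψ(ζ t) − ζ t`, one has
`∫₀¹ ‖u_t(x_t) − (x₁ − x₀)‖² dt = 2[Ψ(x₀) + Ψ̄(x₁) − ⟨x₀,x₁⟩]`. -/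
theorem ofm_identity
    (d : ℕ) (Ψ : EuclideanSpace ℝ (Fin d) → ℝ)
    (G : EuclideanSpace ℝ (Fin d) → EuclideanSpace ℝ (Fin d))
    (hconv : ConvexOn ℝ Set.univ Ψ)
    (hgrad : ∀ x, HasGradientAt Ψ (G x) x)
    (hbij : Function.Bijective G)
    (hGinv : Continuous (Function.invFun G))
    (hφbij : ∀ t ∈ Set.Ico (0 : ℝ) 1,
      Function.Bijective (fun z : EuclideanSpace ℝ (Fin d) => (1 - t) • z + t • G z))
    (x0 x1 : EuclideanSpace ℝ (Fin d))
    (conjx1 : ℝ)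
    (hconj : IsLUB (Set.range fun z => ⟪x1, z⟫ - Ψ z) conjx1)
    (ζ : ℝ → EuclideanSpace ℝ (Fin d))
    (hζ : ∀ t ∈ Set.Ico (0 : ℝ) 1,
      (1 - t) • ζ t + t • G (ζ t) = (1 - t) • x0 + t • x1) :
    ∫ t in (0 : ℝ)..1, ‖(G (ζ t) - ζ t) - (x1 - x0)‖ ^ 2
      = 2 * (Ψ x0 + conjx1 - ⟪x0, x1⟫) := by
  classical
  set w : ℝ → EuclideanSpace ℝ (Fin d) := fun σ => G (ζ σ) - ζ σ - (x1 - x0) with hw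
  have gradIneq : ∀ z y : EuclideanSpace ℝ (Fin d), Ψ z + ⟪G z, y - z⟫ ≤ Ψ y :=
    fun z y => grad_ineq_aux d Ψ hconv (hgrad z) y
  have mono : ∀ z y : EuclideanSpace ℝ (Fin d), 0 ≤ ⟪G y - G z, y - z⟫ := by
    intro z y
    have h1 := gradIneq z y
    have h2 := gradIneq y z
    have e1 : ⟪G y, z - y⟫ = -⟪G y, y - z⟫ := by
      rw [← inner_neg_right]; congr 1; module
    rw [inner_sub_left]
    linarith [e1 ▸ h2]
  have h01 : (0:ℝ) ∈ Set.Ico (0:ℝ) 1 := by norm_num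
  have hζ0 : ζ 0 = x0 := by
    have h := hζ 0 h01
    simpa using h
  have hkey : ∀ t ∈ Set.Ico (0:ℝ) 1, x0 - ζ t = t • w t := by
    intro t ht
    have h := hζ t ht
    rw [hw]
    linear_combination (norm := module) -h
  have hGrel : ∀ t ∈ Set.Ico (0:ℝ) 1, G (ζ t) - x1 = (1 - t) • w t := by
    intro t ht
    have h := hζ t ht
    rw [hw]
    linear_combination (norm := module) h
  have hlip : ∀ s ∈ Set.Ico (0:ℝ) 1, ∀ t ∈ Set.Ico (0:ℝ) 1,
      (1 - t) * ‖ζ s - ζ t‖ ≤ |t - s| * ‖w s‖ := by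
    intro s hs t ht
    have e1 : (1 - t) • (ζ s - ζ t) + t • (G (ζ s) - G (ζ t)) = (t - s) • w s := by
      rw [hw]
      linear_combination (norm := module) hζ s hs - hζ t ht
    have h2 : (1 - t) * ⟪ζ s - ζ t, ζ s - ζ t⟫ ≤ ⟪(t - s) • w s, ζ s - ζ t⟫ := by
      rw [← e1, inner_add_left, real_inner_smul_left, real_inner_smul_left]
      nlinarith [mono (ζ t) (ζ s), ht.1]
    have h3 : ⟪(t - s) • w s, ζ s - ζ t⟫ ≤ |t - s| * (‖w s‖ * ‖ζ s - ζ t‖) := by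
      rw [real_inner_smul_left]
      calc (t - s) * ⟪w s, ζ s - ζ t⟫ ≤ |(t - s) * ⟪w s, ζ s - ζ t⟫| := le_abs_self _
        _ = |t - s| * |⟪w s, ζ s - ζ t⟫| := abs_mul _ _
        _ ≤ |t - s| * (‖w s‖ * ‖ζ s - ζ t‖) := by
            exact mul_le_mul_of_nonneg_left (abs_real_inner_le_norm _ _) (abs_nonneg _)
    have h4 : (1 - t) * ‖ζ s - ζ t‖ ^ 2 ≤ |t - s| * ‖w s‖ * ‖ζ s - ζ t‖ := by
      rw [← real_inner_self_eq_norm_sq]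
      linarith
    rcases eq_or_lt_of_le (norm_nonneg (ζ s - ζ t)) with hn | hn
    · rw [← hn, mul_zero]
      positivity
    · have := le_of_mul_le_mul_right (by linarith : (1 - t) * ‖ζ s - ζ t‖ * ‖ζ s - ζ t‖ ≤ |t - s| * ‖w s‖ * ‖ζ s - ζ t‖) hn
      linarith
  have hζcont : ∀ t ∈ Set.Ico (0:ℝ) 1, ContinuousWithinAt ζ (Set.Ico 0 1) t := by
    intro t ht
    rw [Metric.continuousWithinAt_iff]
    intro ε hε
    have h1t : (0:ℝ) < 1 - t := by linarith [ht.2]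
    have hwpos : (0:ℝ) < ‖w t‖ + 1 := by positivity
    refine ⟨min ((1-t)/2) (ε * (1-t) / (2 * (‖w t‖ + 1))),
      lt_min (by linarith) (div_pos (mul_pos hε h1t) (by positivity)), ?_⟩
    intro s hs hdist
    rw [Real.dist_eq] at hdist
    have h1 : |s - t| < (1-t)/2 := lt_of_lt_of_le hdist (min_le_left _ _)
    have h2 : |s - t| < ε * (1-t) / (2 * (‖w t‖ + 1)) := lt_of_lt_of_le hdist (min_le_right _ _)
    rw [lt_div_iff₀ (by positivity)] at h2
    have h1s : (1-t)/2 < 1 - s := by have := abs_lt.1 h1; linarith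
    have hl := hlip t ht s hs
    rw [dist_eq_norm, norm_sub_rev]
    nlinarith [norm_nonneg (ζ t - ζ s), norm_nonneg (w t), abs_nonneg (s - t), hε, h1t]
  -- the conjugate point
  set zs : EuclideanSpace ℝ (Fin d) := Function.invFun G x1 with hzs
  have hGz : G zs = x1 := Function.rightInverse_invFun hbij.2 x1
  have hconjval : conjx1 = ⟪x1, zs⟫ - Ψ zs := by
    have hub : ∀ y, ⟪x1, y⟫ - Ψ y ≤ ⟪x1, zs⟫ - Ψ zs := by
      intro y
      have h := gradIneq zs y
      rw [hGz, inner_sub_right] at h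
      linarith
    refine hconj.unique ⟨?_, ?_⟩
    · rintro _ ⟨y, rfl⟩
      exact hub y
    · intro b hb
      exact hb ⟨zs, rfl⟩
  -- bounds
  have hwb1 : ∀ t ∈ Set.Ico (0:ℝ) 1, (1 - t) * ‖w t‖ ≤ ‖w 0‖ := by
    intro t ht
    have hl := hlip 0 h01 t ht
    have hx : ‖ζ 0 - ζ t‖ = t * ‖w t‖ := by
      rw [hζ0, hkey t ht, norm_smul, Real.norm_eq_abs, abs_of_nonneg ht.1]
    rw [hx, sub_zero, abs_of_nonneg ht.1] at hl
    rcases eq_or_lt_of_le ht.1 with h0 | h0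
    · rw [← h0]
      simp
    · rw [← mul_le_mul_iff_right₀ h0]
      calc t * ((1 - t) * ‖w t‖) = (1 - t) * (t * ‖w t‖) := by ring
        _ ≤ t * ‖w 0‖ := hl
  have hball : ∀ t ∈ Set.Ico (0:ℝ) 1, ‖ζ t - zs‖ ≤ ‖x0 - zs‖ := by
    intro t ht
    rcases eq_or_lt_of_le ht.1 with h0 | h0
    · rw [← h0, hζ0]
    · have hm := mono zs (ζ t)
      rw [hGz, hGrel t ht, real_inner_smul_left] at hm
      have h1t : (0:ℝ) < 1 - t := by linarith [ht.2]
      have hm2 : 0 ≤ ⟪w t, ζ t - zs⟫ := by nlinarith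
      have hm3 : 0 ≤ ⟪x0 - ζ t, ζ t - zs⟫ := by
        rw [hkey t ht, real_inner_smul_left]
        exact mul_nonneg ht.1 hm2
      have hsplit : (x0 - ζ t) = (x0 - zs) - (ζ t - zs) := by module
      rw [hsplit, inner_sub_left] at hm3
      have hcs : ⟪x0 - zs, ζ t - zs⟫ ≤ ‖x0 - zs‖ * ‖ζ t - zs‖ := real_inner_le_norm _ _
      have hsq : ‖ζ t - zs‖^2 ≤ ‖x0 - zs‖ * ‖ζ t - zs‖ := by
        rw [← real_inner_self_eq_norm_sq]
        linarith
      rcases eq_or_lt_of_le (norm_nonneg (ζ t - zs)) with hn | hn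
      · rw [← hn]
        positivity
      · nlinarith
  have hwb2 : ∀ t ∈ Set.Ico (0:ℝ) 1, t * ‖w t‖ ≤ 2 * ‖x0 - zs‖ := by
    intro t ht
    have h1 : t * ‖w t‖ = ‖x0 - ζ t‖ := by
      rw [hkey t ht, norm_smul, Real.norm_eq_abs, abs_of_nonneg ht.1]
    have hsplit : (x0 - ζ t) = (x0 - zs) - (ζ t - zs) := by module
    have h2 : ‖x0 - ζ t‖ ≤ ‖x0 - zs‖ + ‖ζ t - zs‖ := by
      rw [hsplit]
      exact norm_sub_le _ _
    have h3 := hball t ht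
    rw [h1]
    linarith
  have hwM : ∀ t ∈ Set.Ioo (0:ℝ) 1, ‖w t‖ ≤ 2 * ‖w 0‖ + 4 * ‖x0 - zs‖ := by
    intro t ht
    rcases le_or_gt t (1/2) with hc | hc
    · have := hwb1 t ⟨ht.1.le, ht.2⟩
      nlinarith [norm_nonneg (w t), norm_nonneg (w 0), norm_nonneg (x0 - zs)]
    · have := hwb2 t ⟨ht.1.le, ht.2⟩
      nlinarith [norm_nonneg (w t), norm_nonneg (w 0), norm_nonneg (x0 - zs)]
  -- the potential
  set Hf : ℝ → ℝ := fun σ => Ψ (ζ σ) - ⟪ζ σ, x1⟫ + (1/2) * ⟪x0 - ζ σ, G (ζ σ) - x1⟫ with hHf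
  set Ht : ℝ → ℝ := fun σ => if σ < 1 then Hf σ else -conjx1 with hHt
  have hH0 : Ht 0 = Ψ x0 - ⟪x0, x1⟫ := by
    rw [hHt]
    simp only [if_pos one_pos, hHf, hζ0, sub_self, inner_zero_left]
    ring
  have hH1 : Ht 1 = -conjx1 := by rw [hHt]; simp
  have hderiv : ∀ t ∈ Set.Ioo (0:ℝ) 1,
      HasDerivAt Ht (-(1/2) * ‖G (ζ t) - ζ t - (x1 - x0)‖ ^ 2) t := by
    intro t ht
    obtain ⟨ht0, ht1⟩ := ht
    have htI : t ∈ Set.Ico (0:ℝ) 1 := ⟨ht0.le, ht1⟩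
    have h1t : (0:ℝ) < 1 - t := by linarith
    set u : EuclideanSpace ℝ (Fin d) := w t with hu
    have hM00 : 0 ≤ ‖u‖ := norm_nonneg _
    set K := (2/t) * (2*‖u‖/(1-t) + ‖u‖) with hKdef
    have hK0 : 0 ≤ K := by
      apply mul_nonneg (by positivity)
      exact add_nonneg (div_nonneg (by positivity) h1t.le) hM00
    set C := (1/2)*‖u‖^2 + ‖u‖*K + (1/2)*K^2 + (‖u‖+K)^2 with hCdef
    have hC0 : 0 ≤ C := by rw [hCdef]; positivity
    set L := -(1/2) * ‖u‖^2 with hL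
    have main : ∀ s ∈ Set.Ioo (t/2) ((1+t)/2), |Hf s - Hf t - (s - t) * L| ≤ C * (s-t)^2 := by
      intro s hsmem
      have hs0 : (0:ℝ) < s := lt_trans (by linarith) hsmem.1
      have hs1 : s < 1 := by linarith [hsmem.2]
      have hsI : s ∈ Set.Ico (0:ℝ) 1 := ⟨hs0.le, hs1⟩
      have h1s : (1 - t)/2 ≤ 1 - s := by linarith [hsmem.2]
      have h1s0 : (0:ℝ) < 1 - s := by linarith
      set v : EuclideanSpace ℝ (Fin d) := w s with hv
      set δ : EuclideanSpace ℝ (Fin d) := v - u with hδ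
      have hvud : v = u + δ := by rw [hδ]; module
      -- vector identities
      have hxs : x0 - ζ s = s • v := hkey s hsI
      have hxt : x0 - ζ t = t • u := hkey t htI
      have hGs : G (ζ s) - x1 = (1 - s) • v := hGrel s hsI
      have hGt : G (ζ t) - x1 = (1 - t) • u := hGrel t htI
      have hzz : ζ s - ζ t = t • u - s • v := by
        linear_combination (norm := module) hxt - hxs
      have hzz' : ζ t - ζ s = s • v - t • u := by
        linear_combination (norm := module) hxs - hxt
      -- bound on δ
      have hζst : (1 - s) * ‖ζ t - ζ s‖ ≤ |s - t| * ‖u‖ := hlip t htI s hsI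
      have hζst2 : ‖ζ t - ζ s‖ ≤ 2*‖u‖/(1-t) * |s - t| := by
        rw [div_mul_eq_mul_div, le_div_iff₀ h1t]
        nlinarith only [hζst, h1s, norm_nonneg (ζ t - ζ s), abs_nonneg (s - t), norm_nonneg u]
      have hsδ : s • δ = (ζ t - ζ s) + (t - s) • u := by
        rw [hδ]
        linear_combination (norm := module) hxt - hxs
      have hsδn : s * ‖δ‖ ≤ 2*‖u‖/(1-t) * |s - t| + |s - t| * ‖u‖ := by
        have h1 : ‖s • δ‖ = s * ‖δ‖ := by
          rw [norm_smul, Real.norm_eq_abs, abs_of_nonneg hs0.le]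
        have h2 : ‖(ζ t - ζ s) + (t - s) • u‖ ≤ ‖ζ t - ζ s‖ + ‖(t - s) • u‖ := norm_add_le _ _
        have h3 : ‖(t - s) • u‖ = |s - t| * ‖u‖ := by
          rw [norm_smul, Real.norm_eq_abs, abs_sub_comm]
        rw [← h1, hsδ]
        rw [h3] at h2
        linarith only [hζst2, h2]
      have hδK : ‖δ‖ ≤ K * |s - t| := by
        have h2s : t ≤ 2 * s := by linarith [hsmem.1]
        have h5 : t * ‖δ‖ ≤ (2*s) * ‖δ‖ := mul_le_mul_of_nonneg_right h2s (norm_nonneg δ)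
        have htt : t * (2/t) = 2 := by field_simp
        have hKt : t * (K * |s - t|) = 2 * ((2*‖u‖/(1-t) + ‖u‖) * |s - t|) := by
          rw [hKdef]
          calc t * (2/t * (2*‖u‖/(1-t) + ‖u‖) * |s - t|)
              = (t * (2/t)) * ((2*‖u‖/(1-t) + ‖u‖) * |s - t|) := by ring
            _ = 2 * ((2*‖u‖/(1-t) + ‖u‖) * |s - t|) := by rw [htt]
        have h6 : t * ‖δ‖ ≤ t * (K * |s - t|) := by
          rw [hKt]
          linarith only [hsδn, h5]
        exact le_of_mul_le_mul_left h6 ht0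
      -- scalar quantities
      set p := (⟪u, u⟫ : ℝ) with hpdef
      set q := (⟪u, δ⟫ : ℝ) with hqdef
      set r := (⟪δ, δ⟫ : ℝ) with hrdef
      have hp0 : (0:ℝ) ≤ p := by rw [hpdef]; exact real_inner_self_nonneg
      have hr0 : (0:ℝ) ≤ r := by rw [hrdef]; exact real_inner_self_nonneg
      have hpn : p = ‖u‖^2 := by rw [hpdef]; exact real_inner_self_eq_norm_sq u
      have hrn : r = ‖δ‖^2 := by rw [hrdef]; exact real_inner_self_eq_norm_sq δ
      have hpb : p ≤ ‖u‖^2 := le_of_eq hpn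
      have hqb : |q| ≤ ‖u‖ * (K * |s - t|) := by
        rw [hqdef]
        calc |(⟪u, δ⟫ : ℝ)| ≤ ‖u‖ * ‖δ‖ := abs_real_inner_le_norm _ _
          _ ≤ ‖u‖ * (K * |s - t|) := mul_le_mul_of_nonneg_left hδK (norm_nonneg u)
      have hrb : r ≤ K^2 * (s - t)^2 := by
        rw [hrn]
        calc ‖δ‖^2 ≤ (K * |s - t|)^2 := by nlinarith only [norm_nonneg δ, hδK, abs_nonneg (s - t), hK0]
          _ = K^2 * |s - t|^2 := by rw [mul_pow]
          _ = K^2 * (s - t)^2 := by rw [sq_abs]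
      -- inner product expansions
      have e_uv : (⟪u, v⟫ : ℝ) = p + q := by rw [hvud, inner_add_right, hpdef, hqdef]
      have e_vu : (⟪v, u⟫ : ℝ) = p + q := by rw [real_inner_comm]; exact e_uv
      have e_vv : (⟪v, v⟫ : ℝ) = p + 2*q + r := by
        rw [hvud, real_inner_add_add_self, hpdef, hqdef, hrdef]
      have e_Ts : (⟪x0 - ζ s, G (ζ s) - x1⟫ : ℝ) = s*(1-s)*(p+2*q+r) := by
        rw [hxs, hGs, real_inner_smul_left, real_inner_smul_right, e_vv]
        ring
      have e_Tt : (⟪x0 - ζ t, G (ζ t) - x1⟫ : ℝ) = t*(1-t)*p := by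
        rw [hxt, hGt, real_inner_smul_left, real_inner_smul_right, hpdef]
        ring
      have e_Gt : (⟪G (ζ t), ζ s - ζ t⟫ : ℝ) - ⟪x1, ζ s - ζ t⟫ = (1-t)*(t*p - s*(p+q)) := by
        rw [← inner_sub_left, hGt, hzz, real_inner_smul_left, inner_sub_right,
          real_inner_smul_right, real_inner_smul_right, e_uv, hpdef]
      have e_Gs : (⟪G (ζ s), ζ t - ζ s⟫ : ℝ) - ⟪x1, ζ t - ζ s⟫ = (1-s)*(s*(p+2*q+r) - t*(p+q)) := by
        rw [← inner_sub_left, hGs, hzz', real_inner_smul_left, inner_sub_right,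
          real_inner_smul_right, real_inner_smul_right, e_vv, e_vu]
      have e_x1s : (⟪x1, ζ s - ζ t⟫ : ℝ) = ⟪ζ s, x1⟫ - ⟪ζ t, x1⟫ := by
        rw [inner_sub_right, real_inner_comm x1 (ζ s), real_inner_comm x1 (ζ t)]
      have e_x1t : (⟪x1, ζ t - ζ s⟫ : ℝ) = ⟪ζ t, x1⟫ - ⟪ζ s, x1⟫ := by
        rw [inner_sub_right, real_inner_comm x1 (ζ s), real_inner_comm x1 (ζ t)]
      -- sandwich
      have low := gradIneq (ζ t) (ζ s)
      have high := gradIneq (ζ s) (ζ t)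
      have hHfs : Hf s = Ψ (ζ s) - ⟪ζ s, x1⟫ + (1/2) * ⟪x0 - ζ s, G (ζ s) - x1⟫ := rfl
      have hHft : Hf t = Ψ (ζ t) - ⟪ζ t, x1⟫ + (1/2) * ⟪x0 - ζ t, G (ζ t) - x1⟫ := rfl
      have key_low : (1-t)*(t*p - s*(p+q)) + (1/2)*(s*(1-s)*(p+2*q+r) - t*(1-t)*p)
          ≤ Hf s - Hf t := by
        rw [hHfs, hHft, e_Ts, e_Tt]
        linarith only [low, e_Gt, e_x1s]
      have key_high : Hf s - Hf t
          ≤ (1-s)*(t*(p+q) - s*(p+2*q+r)) + (1/2)*(s*(1-s)*(p+2*q+r) - t*(1-t)*p) := by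
        rw [hHfs, hHft, e_Ts, e_Tt]
        linarith only [high, e_Gs, e_x1t]
      -- algebraic identities
      have id_low : (1-t)*(t*p - s*(p+q)) + (1/2)*(s*(1-s)*(p+2*q+r) - t*(1-t)*p) - (s-t)*L
          = -(1/2)*(s-t)^2*p - s*(s-t)*q + (1/2)*s*(1-s)*r := by
        rw [hL, ← hpn]
        ring
      have id_high : (1-s)*(t*(p+q) - s*(p+2*q+r)) + (1/2)*(s*(1-s)*(p+2*q+r) - t*(1-t)*p) - (s-t)*L
          = (1/2)*(s-t)^2*p + (s-1)*(s-t)*q - (1/2)*s*(1-s)*r := by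
        rw [hL, ← hpn]
        ring
      have hbounds := ofm_bound_aux s t p q r ‖u‖ K hs0 hs1 hp0 hpb hr0 hrb hM00 hK0 hqb
      have hb1 := (abs_le.1 hbounds.1).1
      have hb2 := (abs_le.1 hbounds.2).2
      rw [abs_le]
      constructor
      · rw [hCdef]
        linarith only [key_low, id_low, hb1]
      · rw [hCdef]
        linarith only [key_high, id_high, hb2]
    have hHfd : HasDerivAt Hf L t := by
      rw [hasDerivAt_iff_isLittleO]
      have hsmall : (fun s : ℝ => (s - t)^2) =o[nhds t] (fun s => s - t) := by
        rw [Asymptotics.isLittleO_iff]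
        intro c hc
        filter_upwards [Metric.ball_mem_nhds t hc] with s hs
        have hs' : |s - t| < c := by rw [← Real.dist_eq]; exact Metric.mem_ball.1 hs
        rw [Real.norm_eq_abs, Real.norm_eq_abs]
        nlinarith only [abs_nonneg (s - t), sq_abs (s - t), hs', abs_of_nonneg (sq_nonneg (s - t)), hc]
      have hBig : (fun s => Hf s - Hf t - (s - t) • L) =O[nhds t] (fun s : ℝ => (s - t)^2) := by
        rw [Asymptotics.isBigO_iff]
        refine ⟨C, ?_⟩
        filter_upwards [Ioo_mem_nhds (by linarith : t/2 < t) (by linarith : t < (1+t)/2)] with s hs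
        rw [Real.norm_eq_abs, Real.norm_eq_abs, smul_eq_mul]
        calc |Hf s - Hf t - (s-t) * L| ≤ C * (s-t)^2 := main s hs
          _ = C * |(s-t)^2| := by rw [abs_of_nonneg (sq_nonneg (s-t))]
      exact hBig.trans_isLittleO hsmall
    have hfinal : HasDerivAt Ht L t := by
      apply hHfd.congr_of_eventuallyEq
      filter_upwards [Iio_mem_nhds ht1] with s hs
      rw [hHt]
      exact if_pos hs
    exact hfinal
  have hcontH : ContinuousOn Ht (Set.Icc 0 1) := by
    intro τ hτ
    rcases lt_or_eq_of_le hτ.2 with hτ1 | hτ1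
    · -- τ < 1 : Ht agrees with Hf near τ
      have hτI : τ ∈ Set.Ico (0:ℝ) 1 := ⟨hτ.1, hτ1⟩
      have hIcoIcc : Set.Icc (0:ℝ) 1 ∩ Set.Iio 1 = Set.Ico (0:ℝ) 1 :=
        Set.ext fun x => ⟨fun h => ⟨h.1.1, h.2⟩, fun h => ⟨⟨h.1, h.2.le⟩, h.2⟩⟩
      have hres : nhdsWithin τ (Set.Icc (0:ℝ) 1) = nhdsWithin τ (Set.Ico (0:ℝ) 1) := by
        rw [nhdsWithin_restrict' (Set.Icc (0:ℝ) 1) (Iio_mem_nhds hτ1), hIcoIcc]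
      have hζτ : ContinuousWithinAt ζ (Set.Ico 0 1) τ := hζcont τ hτI
      have hΨτ : ContinuousWithinAt (fun s => Ψ (ζ s)) (Set.Ico 0 1) τ :=
        ((hgrad (ζ τ)).hasFDerivAt.continuousAt).comp_continuousWithinAt hζτ
      have hinner1 : ContinuousWithinAt (fun s => (⟪ζ s, x1⟫ : ℝ)) (Set.Ico 0 1) τ :=
        Filter.Tendsto.inner hζτ continuousWithinAt_const
      have hT3 : ContinuousWithinAt (fun s => (⟪x0 - ζ s, G (ζ s) - x1⟫ : ℝ))
          (Set.Ico 0 1) τ := by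
        rcases eq_or_lt_of_le hτ.1 with h0 | h0
        · -- τ = 0 : squeeze to zero
          rw [← h0]
          have hbd : ∀ᶠ s in nhdsWithin 0 (Set.Ico (0:ℝ) 1),
              ‖(⟪x0 - ζ s, G (ζ s) - x1⟫ : ℝ)‖ ≤ ‖w 0‖ * ‖x0 - ζ s‖ := by
            filter_upwards [self_mem_nhdsWithin] with s hs
            have h1 : ‖G (ζ s) - x1‖ = (1 - s) * ‖w s‖ := by
              rw [hGrel s hs, norm_smul, Real.norm_eq_abs,
                abs_of_nonneg (by linarith [hs.2] : (0:ℝ) ≤ 1 - s)]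
            have h2 : |(⟪x0 - ζ s, G (ζ s) - x1⟫ : ℝ)| ≤ ‖x0 - ζ s‖ * ‖G (ζ s) - x1‖ :=
              abs_real_inner_le_norm _ _
            rw [Real.norm_eq_abs]
            have h3 := hwb1 s hs
            rw [h1] at h2
            nlinarith only [h2, h3, norm_nonneg (x0 - ζ s), norm_nonneg (w s), norm_nonneg (w 0)]
          have hlim : Filter.Tendsto (fun s => ‖w 0‖ * ‖x0 - ζ s‖)
              (nhdsWithin 0 (Set.Ico (0:ℝ) 1)) (nhds 0) := by
            have h1 : Filter.Tendsto ζ (nhdsWithin 0 (Set.Ico (0:ℝ) 1)) (nhds (ζ 0)) :=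
              hζcont 0 h01
            have h2 := (((tendsto_const_nhds (x := x0)).sub h1).norm).const_mul ‖w 0‖
            rw [hζ0, sub_self, norm_zero, mul_zero] at h2
            exact h2
          have key := squeeze_zero_norm' hbd hlim
          have hval : (⟪x0 - ζ 0, G (ζ 0) - x1⟫ : ℝ) = 0 := by
            rw [hζ0, sub_self, inner_zero_left]
          show Filter.Tendsto _ _ _
          convert key using 2
        · -- τ > 0 : inner product of continuous pieces
          have hGτ : ContinuousWithinAt (fun s => ((1 - s) * s⁻¹) • (x0 - ζ s))
              (Set.Ico 0 1) τ := by
            apply ContinuousWithinAt.fun_smul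
            · exact (continuousWithinAt_const.sub continuousWithinAt_id).mul
                (continuousWithinAt_id.inv₀ (ne_of_gt h0))
            · exact continuousWithinAt_const.sub hζτ
          have hEq : ∀ s ∈ Set.Ico (0:ℝ) 1, 0 < s →
              G (ζ s) - x1 = ((1 - s) * s⁻¹) • (x0 - ζ s) := by
            intro s hs hs0
            rw [hGrel s hs, hkey s hs, smul_smul]
            congr 1
            field_simp
          have hg : ContinuousWithinAt
              (fun s => (⟪x0 - ζ s, ((1 - s) * s⁻¹) • (x0 - ζ s)⟫ : ℝ)) (Set.Ico 0 1) τ :=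
            Filter.Tendsto.inner (continuousWithinAt_const.sub hζτ) hGτ
          have hIoi : ∀ᶠ s in nhdsWithin τ (Set.Ico (0:ℝ) 1), 0 < s :=
            Filter.Eventually.filter_mono nhdsWithin_le_nhds (eventually_gt_nhds h0)
          apply hg.congr_of_eventuallyEq
          · filter_upwards [hIoi, self_mem_nhdsWithin] with s hs0 hsI
            rw [hEq s hsI hs0]
          · rw [hEq τ hτI h0]
      have hHfτ : ContinuousWithinAt Hf (Set.Ico 0 1) τ :=
        (hΨτ.sub hinner1).add (continuousWithinAt_const.mul hT3)
      have hHtτ : ContinuousWithinAt Ht (Set.Ico 0 1) τ := by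
        apply hHfτ.congr_of_eventuallyEq
        · filter_upwards [self_mem_nhdsWithin] with s hs
          rw [hHt]
          exact if_pos hs.2
        · rw [hHt]
          exact if_pos hτ1
      show Filter.Tendsto Ht (nhdsWithin τ (Set.Icc 0 1)) (nhds (Ht τ))
      rw [hres]
      exact hHtτ
    · -- τ = 1
      subst hτ1
      have hsplit : Set.Icc (0:ℝ) 1 = Set.Ico 0 1 ∪ {1} :=
        (Set.Ico_union_right (by norm_num)).symm
      show Filter.Tendsto Ht (nhdsWithin 1 (Set.Icc 0 1)) (nhds (Ht 1))
      rw [hH1, hsplit, nhdsWithin_union]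
      rw [Filter.tendsto_sup]
      constructor
      · -- within Ico 0 1
        have l1 : Filter.Tendsto (fun s => G (ζ s) - x1) (nhdsWithin 1 (Set.Ico (0:ℝ) 1))
            (nhds 0) := by
          have hbd : ∀ᶠ s in nhdsWithin 1 (Set.Ico (0:ℝ) 1),
              ‖G (ζ s) - x1‖ ≤ (1 - s) * (2 * ‖w 0‖ + 4 * ‖x0 - zs‖) := by
            have hIoi : ∀ᶠ s in nhdsWithin 1 (Set.Ico (0:ℝ) 1), (1:ℝ)/2 < s :=
              Filter.Eventually.filter_mono nhdsWithin_le_nhds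
                (eventually_gt_nhds (by norm_num))
            filter_upwards [hIoi, self_mem_nhdsWithin] with s hs2 hsI
            have h1 : ‖G (ζ s) - x1‖ = (1 - s) * ‖w s‖ := by
              rw [hGrel s hsI, norm_smul, Real.norm_eq_abs,
                abs_of_nonneg (by linarith [hsI.2] : (0:ℝ) ≤ 1 - s)]
            have h2 := hwM s ⟨by linarith, hsI.2⟩
            rw [h1]
            have h3 : (0:ℝ) ≤ 1 - s := by linarith [hsI.2]
            nlinarith only [h2, h3]
          have hlim : Filter.Tendsto (fun s : ℝ => (1 - s) * (2 * ‖w 0‖ + 4 * ‖x0 - zs‖))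
              (nhdsWithin 1 (Set.Ico (0:ℝ) 1)) (nhds 0) := by
            have hc : Continuous (fun s : ℝ => (1 - s) * (2 * ‖w 0‖ + 4 * ‖x0 - zs‖)) :=
              (continuous_const.sub continuous_id).mul continuous_const
            have h2 := (hc.tendsto 1).mono_left (nhdsWithin_le_nhds (s := Set.Ico (0:ℝ) 1))
            simpa using h2
          exact squeeze_zero_norm' hbd hlim
        have l2 : Filter.Tendsto (fun s => G (ζ s)) (nhdsWithin 1 (Set.Ico (0:ℝ) 1))
            (nhds x1) := by
          have h := l1.add_const x1
          simp only [sub_add_cancel, zero_add] at h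
          exact h
        have l3 : Filter.Tendsto ζ (nhdsWithin 1 (Set.Ico (0:ℝ) 1)) (nhds zs) := by
          have hcomp := (hGinv.tendsto x1).comp l2
          have heq : ∀ s : ℝ, Function.invFun G (G (ζ s)) = ζ s := fun s =>
            Function.leftInverse_invFun hbij.1 (ζ s)
          have : Filter.Tendsto (fun s => Function.invFun G (G (ζ s)))
              (nhdsWithin 1 (Set.Ico (0:ℝ) 1)) (nhds (Function.invFun G x1)) := hcomp
          rw [hzs]
          exact this.congr heq
        have l4 : Filter.Tendsto (fun s => Ψ (ζ s)) (nhdsWithin 1 (Set.Ico (0:ℝ) 1))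
            (nhds (Ψ zs)) := ((hgrad zs).hasFDerivAt.continuousAt.tendsto).comp l3
        have l5 : Filter.Tendsto (fun s => (⟪ζ s, x1⟫ : ℝ)) (nhdsWithin 1 (Set.Ico (0:ℝ) 1))
            (nhds ⟪zs, x1⟫) := Filter.Tendsto.inner l3 tendsto_const_nhds
        have l6 : Filter.Tendsto (fun s => (⟪x0 - ζ s, G (ζ s) - x1⟫ : ℝ))
            (nhdsWithin 1 (Set.Ico (0:ℝ) 1)) (nhds 0) := by
          have h : Filter.Tendsto (fun s => (⟪x0 - ζ s, G (ζ s) - x1⟫ : ℝ))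
              (nhdsWithin 1 (Set.Ico (0:ℝ) 1))
              (nhds (⟪x0 - zs, (0 : EuclideanSpace ℝ (Fin d))⟫ : ℝ)) :=
            Filter.Tendsto.inner ((tendsto_const_nhds (x := x0)).sub l3) l1
          rw [inner_zero_right] at h
          exact h
        have l7 : Filter.Tendsto Hf (nhdsWithin 1 (Set.Ico (0:ℝ) 1))
            (nhds (Ψ zs - ⟪zs, x1⟫ + (1/2) * 0)) :=
          (l4.sub l5).add (tendsto_const_nhds.mul l6)
        have hval : Ψ zs - ⟪zs, x1⟫ + (1/2) * 0 = -conjx1 := by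
          rw [hconjval, real_inner_comm zs x1]
          ring
        rw [hval] at l7
        apply l7.congr'
        filter_upwards [self_mem_nhdsWithin] with s hs
        rw [hHt]
        exact (if_pos hs.2).symm
      · rw [nhdsWithin_singleton]
        have h := tendsto_pure_nhds Ht 1
        rwa [hH1] at h
  have hintg : IntervalIntegrable (fun t => ‖G (ζ t) - ζ t - (x1 - x0)‖ ^ 2)
      MeasureTheory.volume 0 1 := by
    rw [intervalIntegrable_iff_integrableOn_Ioo_of_le (by norm_num : (0:ℝ) ≤ 1)]
    have hζIco : ContinuousOn ζ (Set.Ico 0 1) := hζcont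
    have hζIoo : ContinuousOn ζ (Set.Ioo 0 1) := hζIco.mono Set.Ioo_subset_Ico_self
    have hcontf : ContinuousOn (fun t => ‖G (ζ t) - ζ t - (x1 - x0)‖ ^ 2) (Set.Ioo 0 1) := by
      have hgcont : ContinuousOn (fun s : ℝ => ‖s⁻¹ • (x0 - ζ s)‖ ^ 2) (Set.Ioo 0 1) := by
        apply ContinuousOn.pow
        apply ContinuousOn.norm
        apply ContinuousOn.fun_smul
        · exact continuousOn_id.inv₀ (fun s hs => ne_of_gt hs.1)
        · exact continuousOn_const.sub hζIoo
      apply hgcont.congr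
      intro s hs
      have h1 : x0 - ζ s = s • w s := hkey s ⟨hs.1.le, hs.2⟩
      have h2 : s⁻¹ • (x0 - ζ s) = w s := by
        rw [h1, inv_smul_smul₀ (ne_of_gt hs.1)]
      simp only [h2, hw]
    refine ⟨hcontf.aestronglyMeasurable measurableSet_Ioo,
      MeasureTheory.HasFiniteIntegral.restrict_of_bounded
        (C := (2 * ‖w 0‖ + 4 * ‖x0 - zs‖) ^ 2) measure_Ioo_lt_top ?_⟩
    filter_upwards [MeasureTheory.ae_restrict_mem measurableSet_Ioo] with s hs
    have h := hwM s hs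
    have hfold : G (ζ s) - ζ s - (x1 - x0) = w s := by simp only [hw]
    rw [hfold, Real.norm_eq_abs, abs_of_nonneg (by positivity)]
    exact pow_le_pow_left₀ (norm_nonneg _) h 2
  have hftc := intervalIntegral.integral_eq_sub_of_hasDerivAt_of_le (by norm_num : (0:ℝ) ≤ 1)
    hcontH hderiv (by simpa using hintg.const_mul (-(1/2)))
  rw [hH1, hH0] at hftc
  have hlin : ∫ t in (0:ℝ)..1, -(1/2) * ‖G (ζ t) - ζ t - (x1 - x0)‖ ^ 2
      = -(1/2) * ∫ t in (0:ℝ)..1, ‖G (ζ t) - ζ t - (x1 - x0)‖ ^ 2 :=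
    intervalIntegral.integral_const_mul _ _
  rw [hlin] at hftc
  have : ∫ t in (0:ℝ)..1, ‖(G (ζ t) - ζ t) - (x1 - x0)‖ ^ 2
      = ∫ t in (0:ℝ)..1, ‖G (ζ t) - ζ t - (x1 - x0)‖ ^ 2 := rfl
  rw [this]
  linarith
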